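/- Let P ⊂ ℝ^d be finite, 𝒜 a finite set of centers, and 𝒮 another finite set of centers. Fix a cluster C_j ⊆ P assigned to a single center a ∈ 𝒜. Suppose every p ∈ C_j satisfies ‖p − a‖² ≤ 2·‖p' − a‖² for all p' ∈ C_j (points have comparable costs) and that min_{s∈𝒮} ‖p − s‖² ≥ 8·‖p − a‖² for all p ∈ C_j. Let q = (1/|C_j|)·Σ_{p'∈C_j} min_{s∈𝒮}‖p' − s‖². Then for every p ∈ C_j: |min_{s∈𝒮}‖p − s‖² − q| ≤ γ·√(min_{s∈𝒮}‖p − s‖²)·‖p − a‖ for some absolute constant γ. -/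

import Mathlib

theorem stmt_10 :
    ∃ γ : ℝ, 0 < γ ∧
      ∀ (d : ℕ) (Cj S : Finset (EuclideanSpace ℝ (Fin d)))
        (hC : Cj.Nonempty) (hS : S.Nonempty) (a : EuclideanSpace ℝ (Fin d)),
        (∀ p ∈ Cj, ∀ p' ∈ Cj, ‖p - a‖ ^ 2 ≤ 2 * ‖p' - a‖ ^ 2) →
        (∀ p ∈ Cj, 8 * ‖p - a‖ ^ 2 ≤ S.inf' hS (fun s => ‖p - s‖ ^ 2)) →
        ∀ p ∈ Cj,
          |S.inf' hS (fun s => ‖p - s‖ ^ 2) -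
              (1 / (Cj.card : ℝ)) * ∑ p' ∈ Cj, S.inf' hS (fun s => ‖p' - s‖ ^ 2)| ≤
            γ * Real.sqrt (S.inf' hS (fun s => ‖p - s‖ ^ 2)) * ‖p - a‖ := by
  refine ⟨15, by norm_num, ?_⟩
  intro d Cj S hC hS a h1 h8 p hp
  set F : EuclideanSpace ℝ (Fin d) → ℝ := fun x => S.inf' hS (fun s => ‖x - s‖ ^ 2) with hF
  have hmono : Monotone Real.sqrt := fun _ _ h => Real.sqrt_le_sqrt h
  have hG : ∀ x, Real.sqrt (F x) = S.inf' hS (fun s => ‖x - s‖) := by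
    intro x
    rw [hF]
    rw [Finset.apply_inf'_eq_inf'_comp hS Real.sqrt (fun u v => hmono.map_min)]
    refine Finset.inf'_congr hS rfl ?_
    intro s _
    simp [Real.sqrt_sq (norm_nonneg _)]
  have hF0 : ∀ x, 0 ≤ F x := fun x => Finset.le_inf' hS _ (fun s _ => by positivity)
  have hsq : ∀ x, F x = (Real.sqrt (F x)) ^ 2 := fun x => (Real.sq_sqrt (hF0 x)).symm
  have hLip : ∀ x y : EuclideanSpace ℝ (Fin d),
      Real.sqrt (F x) ≤ Real.sqrt (F y) + ‖x - y‖ := by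
    intro x y
    rw [hG x, hG y]
    obtain ⟨s₀, hs₀, hmin⟩ := S.exists_mem_eq_inf' hS (fun s => ‖y - s‖)
    calc S.inf' hS (fun s => ‖x - s‖) ≤ ‖x - s₀‖ := Finset.inf'_le _ hs₀
      _ ≤ ‖x - y‖ + ‖y - s₀‖ := by
          have : x - s₀ = (x - y) + (y - s₀) := by abel
          rw [this]; exact norm_add_le _ _
      _ = S.inf' hS (fun s => ‖y - s‖) + ‖x - y‖ := by rw [← hmin]; ring
  set t := Real.sqrt (F p) with ht
  have ht0 : 0 ≤ t := Real.sqrt_nonneg _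
  have hct : ‖p - a‖ ≤ t := by
    have h8p := h8 p hp
    nlinarith [hsq p, norm_nonneg (p - a)]
  have key : ∀ p' ∈ Cj, |F p - F p'| ≤ 15 * t * ‖p - a‖ := by
    intro p' hp'
    set t' := Real.sqrt (F p') with ht'
    have ht'0 : 0 ≤ t' := Real.sqrt_nonneg _
    have h1' : ‖p' - a‖ ≤ 2 * ‖p - a‖ := by
      have := h1 p' hp' p hp
      nlinarith [norm_nonneg (p' - a), norm_nonneg (p - a)]
    have hpp' : ‖p - p'‖ ≤ 3 * ‖p - a‖ := by
      have h3 : p - p' = (p - a) - (p' - a) := by abel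
      calc ‖p - p'‖ = ‖(p - a) - (p' - a)‖ := by rw [h3]
        _ ≤ ‖p - a‖ + ‖p' - a‖ := norm_sub_le _ _
        _ ≤ 3 * ‖p - a‖ := by linarith
    have habs : |t - t'| ≤ 3 * ‖p - a‖ := by
      rw [abs_sub_le_iff]
      constructor
      · have := hLip p p'; linarith
      · have := hLip p' p; rw [norm_sub_rev] at this; linarith
    have habs' := abs_le.mp habs
    have hfac : F p - F p' = (t - t') * (t + t') := by
      rw [hsq p, hsq p', ← ht, ← ht']; ring
    rw [hfac, abs_mul]
    have h2 : |t + t'| ≤ 5 * t := by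
      rw [abs_of_nonneg (by linarith)]
      linarith
    calc |t - t'| * |t + t'| ≤ (3 * ‖p - a‖) * (5 * t) :=
          mul_le_mul habs h2 (abs_nonneg _) (by positivity)
      _ = 15 * t * ‖p - a‖ := by ring
  have hn : 0 < (Cj.card : ℝ) := by
    exact_mod_cast Finset.card_pos.mpr hC
  show |F p - (1 / (Cj.card : ℝ)) * ∑ p' ∈ Cj, F p'| ≤ 15 * t * ‖p - a‖
  have hrw : F p - (1 / (Cj.card : ℝ)) * ∑ p' ∈ Cj, F p'
      = (1 / (Cj.card : ℝ)) * ∑ p' ∈ Cj, (F p - F p') := by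
    rw [Finset.sum_sub_distrib, Finset.sum_const, nsmul_eq_mul]
    field_simp
  rw [hrw, abs_mul, abs_of_nonneg (by positivity : (0:ℝ) ≤ 1 / (Cj.card : ℝ))]
  have hsum : |∑ p' ∈ Cj, (F p - F p')| ≤ ∑ p' ∈ Cj, |F p - F p'| :=
    Finset.abs_sum_le_sum_abs _ _
  have hsum2 : ∑ p' ∈ Cj, |F p - F p'| ≤ (Cj.card : ℝ) * (15 * t * ‖p - a‖) := by
    calc ∑ p' ∈ Cj, |F p - F p'| ≤ ∑ _p' ∈ Cj, (15 * t * ‖p - a‖) :=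
          Finset.sum_le_sum key
      _ = (Cj.card : ℝ) * (15 * t * ‖p - a‖) := by
          rw [Finset.sum_const, nsmul_eq_mul]
  calc (1 / (Cj.card : ℝ)) * |∑ p' ∈ Cj, (F p - F p')|
      ≤ (1 / (Cj.card : ℝ)) * ((Cj.card : ℝ) * (15 * t * ‖p - a‖)) := by
        apply mul_le_mul_of_nonneg_left (le_trans hsum hsum2) (by positivity)
    _ = 15 * t * ‖p - a‖ := by field_simp
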